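/- Let L_∨ ⊆ {a,b}^ω be the language of infinite words that contain the factor aaaa at infinitely many positions or contain the factor bbbb at infinitely many positions. Let T be a deterministic partial transition system over the alphabet {a,b} with states q_0, q_1, …, q_n where n ≥ 1, such that: for every i < n there is a letter σ_i ∈ {a,b} with δ(q_i, σ_i) = q_i (a self-loop) and δ(q_i, τ_i) = q_{i+1} for the other letter τ_i; and δ(q_n, τ) = q_0 for some letter τ ∈ {a,b}, while on the other letter q_n either has a self-loop or no transition. Then there exist ultimately periodic words w1, w2 ∈ {a,b}^ω whose runs in T starting from q_0 are infinite and have exactly the same infinity set (namely all transitions defined among q_0, …, q_n), such that w2 ∈ L_∨ and w1 ∉ L_∨. Consequently, no Muller condition over the transitions of T (and hence no Büchi, generalized Büchi, parity, or Rabin condition) yields an automaton on T with initial state q_0 that recognizes L_∨. -/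

import Mathlib

/-- The ultimately periodic word `u v^ω` (for `v` nonempty) as a function
`ℕ → α`. -/
def upWord {α : Type*} (u v : List α) (hv : v ≠ []) : ℕ → α :=
  fun n =>
    if h : n < u.length then u.get ⟨n, h⟩
    else v.get ⟨(n - u.length) % v.length, Nat.mod_lt _ (List.length_pos_iff.mpr hv)⟩

/-- The (possibly finite) run of a deterministic partial transition system on
an infinite word. -/
def runP {Q A : Type*} (δ : Q → A → Option Q) (q0 : Q) (w : ℕ → A) :
    ℕ → Option Q
  | 0 => some q0
  | n + 1 => (runP δ q0 w n).bind (fun q => δ q (w n))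

/-- The infinity set of the (partial) run on `w`. -/
def infSetP {Q A : Type*} (δ : Q → A → Option Q) (q0 : Q) (w : ℕ → A) :
    Set (Q × A) :=
  {qc | {k | runP δ q0 w k = some qc.1 ∧ w k = qc.2}.Infinite}

/-- The language `L_∨` over the two-letter alphabet `Bool`: words containing
the factor `aaaa` at infinitely many positions or the factor `bbbb` at
infinitely many positions. -/
def Lvee : Set (ℕ → Bool) :=
  {w | ∃ c : Bool,
    {k | w k = c ∧ w (k + 1) = c ∧ w (k + 2) = c ∧ w (k + 3) = c}.Infinite}

lemma upWord_nil_ofFn {α : Type*} {P : ℕ} (g : ℕ → α) (hv) :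
    upWord ([] : List α) (List.ofFn fun j : Fin P => g j) hv = fun k => g (k % P) := by
  funext k
  have hP : 0 < P := by
    by_contra h
    exact hv (by simp [List.ofFn_eq_nil_iff]; omega)
  simp [upWord, List.get_ofFn, List.length_ofFn]

lemma runP_periodic {Q : Type*} {A : Type*} (δ : Q → A → Option Q) (q0 : Q)
    (g : ℕ → A) (s : ℕ → Q) (P : ℕ) (hP : 0 < P)
    (hs0 : s 0 = q0)
    (hstep : ∀ r < P, δ (s r) (g r) = some (s ((r + 1) % P))) :
    ∀ k, runP δ q0 (fun m => g (m % P)) k = some (s (k % P)) := by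
  intro k
  induction k with
  | zero => simp [runP, hs0, Nat.zero_mod]
  | succ k ih =>
      show (runP δ q0 (fun m => g (m % P)) k).bind _ = _
      rw [ih, Option.bind_some]
      show δ (s (k % P)) (g (k % P)) = _
      rw [hstep (k % P) (Nat.mod_lt _ hP), Nat.mod_add_mod]

lemma infSetP_periodic {Q : Type*} {A : Type*} (δ : Q → A → Option Q) (q0 : Q)
    (g : ℕ → A) (s : ℕ → Q) (P : ℕ) (hP : 0 < P)
    (hs0 : s 0 = q0)
    (hstep : ∀ r < P, δ (s r) (g r) = some (s ((r + 1) % P))) :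
    infSetP δ q0 (fun m => g (m % P)) = {qc | ∃ r < P, s r = qc.1 ∧ g r = qc.2} := by
  have hrun := runP_periodic δ q0 g s P hP hs0 hstep
  ext ⟨p, c⟩
  constructor
  · intro h
    obtain ⟨k, hk1, hk2⟩ := h.nonempty
    refine ⟨k % P, Nat.mod_lt _ hP, ?_, hk2⟩
    have := hrun k
    rw [this] at hk1
    exact Option.some_injective _ hk1
  · rintro ⟨r, hr, h1, h2⟩
    apply Set.infinite_of_injective_forall_mem (f := fun m : ℕ => m * P + r)
    case hi =>
      intro a b hab
      simp only at hab
      have : a * P = b * P := by omega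
      exact Nat.eq_of_mul_eq_mul_right hP this
    case hf =>
      intro m
      have hmod : (m * P + r) % P = r := by
        rw [Nat.add_comm, Nat.add_mul_mod_self_right, Nat.mod_eq_of_lt hr]
      refine ⟨?_, ?_⟩
      · rw [hrun (m * P + r), hmod, h1]
      · show g ((m * P + r) % P) = c
        rw [hmod, h2]

def gW (n : ℕ) (σ : ℕ → Bool) (τ : Bool) (loop : Bool) : ℕ → Bool := fun r =>
  if r < 2 * n then (if r % 2 = 0 then σ (r / 2) else !σ (r / 2))
  else (if loop = true ∧ r = 2 * n then !τ else τ)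

def stW (n : ℕ) (q : ℕ → Fin (n + 1)) : ℕ → Fin (n + 1) := fun r =>
  if r < 2 * n then q (r / 2) else q n

def gW2 (n : ℕ) (σ : ℕ → Bool) (τ : Bool) (loop : Bool) : ℕ → Bool := fun r =>
  if r < 3 then σ 0 else gW n σ τ loop (r - 3)

def stW2 (n : ℕ) (q : ℕ → Fin (n + 1)) : ℕ → Fin (n + 1) := fun r =>
  if r < 3 then q 0 else stW n q (r - 3)

section
variable (n : ℕ) (δ : Fin (n + 1) → Bool → Option (Fin (n + 1)))
    (q : ℕ → Fin (n + 1))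
    (σ : ℕ → Bool) (τ : Bool) (loop : Bool)

lemma stepW (hn : 1 ≤ n)
    (hσ1 : ∀ i, i < n → δ (q i) (σ i) = some (q i))
    (hσ2 : ∀ i, i < n → δ (q i) (!σ i) = some (q (i + 1)))
    (hτ : δ (q n) τ = some (q 0))
    (hl : δ (q n) (!τ) = if loop = true then some (q n) else none) :
    ∀ r < 2 * n + (if loop = true then 2 else 1),
      δ (stW n q r) (gW n σ τ loop r) =
        some (stW n q ((r + 1) % (2 * n + (if loop = true then 2 else 1)))) := by
  intro r hr
  set P := 2 * n + (if loop = true then 2 else 1) with hPdef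
  have hP2n : 2 * n < P := by rw [hPdef]; split <;> omega
  by_cases h2 : r < 2 * n
  · have hrd : r / 2 < n := by omega
    by_cases he : r % 2 = 0
    · have h1 : r + 1 < 2 * n := by omega
      have hm : (r + 1) % P = r + 1 := Nat.mod_eq_of_lt (by omega)
      have hd : (r + 1) / 2 = r / 2 := by omega
      simp only [gW, stW, if_pos h2, if_pos he, if_pos h1, hm, hd]
      exact hσ1 _ hrd
    · have hm : (r + 1) % P = r + 1 := Nat.mod_eq_of_lt (by omega)
      simp only [gW, stW, if_pos h2, if_neg he, hm]
      rw [hσ2 _ hrd]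
      by_cases h1 : r + 1 < 2 * n
      · have hd : (r + 1) / 2 = r / 2 + 1 := by omega
        rw [if_pos h1, hd]
      · have hd : r / 2 + 1 = n := by omega
        rw [if_neg h1, hd]
  · have hs : stW n q r = q n := by simp [stW, h2]
    have hs0 : stW n q 0 = q 0 := by
      simp [stW, show 0 < 2 * n by omega]
    by_cases hL : loop = true
    · have hP : P = 2 * n + 2 := by rw [hPdef, if_pos hL]
      by_cases hr2 : r = 2 * n
      · have hm : (r + 1) % P = 2 * n + 1 := by
          rw [hr2]; exact Nat.mod_eq_of_lt (by omega)
        have hg : gW n σ τ loop r = !τ := by simp [gW, h2, hL, hr2]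
        have hs' : stW n q ((r + 1) % P) = q n := by
          rw [hm]; simp [stW, show ¬(2 * n + 1 < 2 * n) by omega]
        rw [hg, hs, hs', hl, if_pos hL]
      · have hr21 : r = 2 * n + 1 := by omega
        have hm : (r + 1) % P = 0 := by rw [hr21, hP]; simp
        have hg : gW n σ τ loop r = τ := by simp [gW, h2, hr21]
        have hs' : stW n q ((r + 1) % P) = q 0 := by rw [hm, hs0]
        rw [hg, hs, hs', hτ]
    · have hP : P = 2 * n + 1 := by rw [hPdef, if_neg hL]
      have hr2 : r = 2 * n := by omega
      have hm : (r + 1) % P = 0 := by rw [hr2, hP]; simp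
      have hg : gW n σ τ loop r = τ := by simp [gW, h2, hL]
      have hs' : stW n q ((r + 1) % P) = q 0 := by rw [hm, hs0]
      rw [hg, hs, hs', hτ]
theorem stepW2 (hn : 1 ≤ n)
    (hσ1 : ∀ i, i < n → δ (q i) (σ i) = some (q i))
    (hstep : ∀ r < 2 * n + (if loop = true then 2 else 1),
      δ (stW n q r) (gW n σ τ loop r) =
        some (stW n q ((r + 1) % (2 * n + (if loop = true then 2 else 1))))) :
    ∀ r < 2 * n + (if loop = true then 2 else 1) + 3,
      δ (stW2 n q r) (gW2 n σ τ loop r) =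
        some (stW2 n q ((r + 1) % (2 * n + (if loop = true then 2 else 1) + 3))) := by
  intro r hr
  set P := 2 * n + (if loop = true then 2 else 1) with hPdef
  have hP2n : 2 * n < P ∧ P ≤ 2 * n + 2 := by rw [hPdef]; split <;> omega
  have hst0 : stW n q 0 = q 0 := by simp [stW, show 0 < 2 * n by omega]
  by_cases h3 : r < 3
  · have hg : gW2 n σ τ loop r = σ 0 := by simp [gW2, h3]
    have hs : stW2 n q r = q 0 := by simp [stW2, h3]
    have hm : (r + 1) % (P + 3) = r + 1 := Nat.mod_eq_of_lt (by omega)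
    have hs' : stW2 n q ((r + 1) % (P + 3)) = q 0 := by
      rw [hm]
      by_cases h4 : r + 1 < 3
      · simp [stW2, h4]
      · have : r + 1 = 3 := by omega
        simp [stW2, this, hst0]
    rw [hg, hs, hs', hσ1 0 (by omega)]
  · have hg : gW2 n σ τ loop r = gW n σ τ loop (r - 3) := by simp [gW2, h3]
    have hs : stW2 n q r = stW n q (r - 3) := by simp [stW2, h3]
    have hr3 : r - 3 < P := by omega
    rw [hg, hs, hstep (r - 3) hr3]
    congr 1
    by_cases hend : r + 1 = P + 3
    · have h1 : (r + 1) % (P + 3) = 0 := by rw [hend]; simp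
      have h2 : (r - 3 + 1) % P = 0 := by
        have : r - 3 + 1 = P := by omega
        rw [this]; simp
      rw [h1, h2, hst0]
      simp [stW2]
    · have h1 : (r + 1) % (P + 3) = r + 1 := Nat.mod_eq_of_lt (by omega)
      have h2 : (r - 3 + 1) % P = r - 2 := by
        rw [Nat.mod_eq_of_lt (by omega)]; omega
      rw [h1, h2]
      have : ¬ r + 1 < 3 := by omega
      simp [stW2, this]

theorem defined_sub_occ (hn : 1 ≤ n) (hq : ∀ i, i ≤ n → (q i).val = i)
    (hσ1 : ∀ i, i < n → δ (q i) (σ i) = some (q i))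
    (hl : δ (q n) (!τ) = if loop = true then some (q n) else none) :
    {qc : Fin (n + 1) × Bool | δ qc.1 qc.2 ≠ none} ⊆
      {qc | ∃ r < 2 * n + (if loop = true then 2 else 1),
        stW n q r = qc.1 ∧ gW n σ τ loop r = qc.2} := by
  set P := 2 * n + (if loop = true then 2 else 1) with hPdef
  have hP2n : 2 * n < P ∧ P ≤ 2 * n + 2 := by rw [hPdef]; split <;> omega
  rintro ⟨p, c⟩ hne
  have hple : (p : ℕ) ≤ n := by omega
  have hpq : q (p : ℕ) = p := Fin.ext (hq _ hple)
  by_cases hpn : (p : ℕ) < n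
  · have h2 : 2 * (p : ℕ) < 2 * n := by omega
    by_cases hc : c = σ (p : ℕ)
    · refine ⟨2 * (p : ℕ), by omega, ?_, ?_⟩
      · show stW n q (2 * (p : ℕ)) = p
        simp [stW, h2, show 2 * (p : ℕ) / 2 = (p : ℕ) by omega, hpq]
      · show gW n σ τ loop (2 * (p : ℕ)) = c
        simp [gW, h2, show 2 * (p : ℕ) % 2 = 0 by omega,
          show 2 * (p : ℕ) / 2 = (p : ℕ) by omega, hc]
    · have hc' : c = !σ (p : ℕ) := by
        cases c <;> cases hv : σ (p : ℕ) <;> simp_all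
      refine ⟨2 * (p : ℕ) + 1, by omega, ?_, ?_⟩
      · show stW n q (2 * (p : ℕ) + 1) = p
        simp [stW, show 2 * (p : ℕ) + 1 < 2 * n by omega,
          show (2 * (p : ℕ) + 1) / 2 = (p : ℕ) by omega, hpq]
      · show gW n σ τ loop (2 * (p : ℕ) + 1) = c
        simp [gW, show 2 * (p : ℕ) + 1 < 2 * n by omega,
          show (2 * (p : ℕ) + 1) % 2 = 1 by omega,
          show (2 * (p : ℕ) + 1) / 2 = (p : ℕ) by omega, hc']
  · have hpn' : (p : ℕ) = n := by omega
    have hpq' : q n = p := by rw [hpn'] at hpq; exact hpq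
    by_cases hc : c = τ
    · by_cases hL : loop = true
      · have hP : P = 2 * n + 2 := by rw [hPdef, if_pos hL]
        refine ⟨2 * n + 1, by omega, ?_, ?_⟩
        · show stW n q (2 * n + 1) = p
          simp [stW, show ¬(2 * n + 1 < 2 * n) by omega, hpq']
        · show gW n σ τ loop (2 * n + 1) = c
          simp [gW, show ¬(2 * n + 1 < 2 * n) by omega, hc]
      · refine ⟨2 * n, by omega, ?_, ?_⟩
        · show stW n q (2 * n) = p
          simp [stW, hpq']
        · show gW n σ τ loop (2 * n) = c
          simp [gW, hL, hc]
    · have hc' : c = !τ := by cases c <;> cases hv : τ <;> simp_all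
      by_cases hL : loop = true
      · refine ⟨2 * n, by omega, ?_, ?_⟩
        · show stW n q (2 * n) = p
          simp [stW, hpq']
        · show gW n σ τ loop (2 * n) = c
          simp [gW, hL, hc']
      · exfalso
        apply hne
        rw [hc', ← hpq']
        rw [hl, if_neg hL]


theorem flipW (hn : 1 ≤ n) :
    ∀ m : ℕ, (m % (2 * n + (if loop = true then 2 else 1))) % 2 = 0 →
      (loop = true ∨ m % (2 * n + (if loop = true then 2 else 1)) ≠ 2 * n) →
      gW n σ τ loop (m % (2 * n + (if loop = true then 2 else 1))) ≠
        gW n σ τ loop ((m + 1) % (2 * n + (if loop = true then 2 else 1))) := by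
  intro m he hcond
  set P := 2 * n + (if loop = true then 2 else 1) with hPdef
  have hP2n : 2 * n < P ∧ P ≤ 2 * n + 2 := by rw [hPdef]; split <;> omega
  set r := m % P with hrdef
  have hr : r < P := Nat.mod_lt _ (by omega)
  have hm1 : (m + 1) % P = (r + 1) % P := (Nat.mod_add_mod m P 1).symm
  by_cases h2 : r < 2 * n
  · have h1 : (r + 1) % P = r + 1 := Nat.mod_eq_of_lt (by omega)
    rw [hm1, h1]
    have hg1 : gW n σ τ loop r = σ (r / 2) := by simp [gW, h2, he]
    have hg2 : gW n σ τ loop (r + 1) = !σ (r / 2) := by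
      by_cases h3 : r + 1 < 2 * n
      · simp [gW, h3, show (r + 1) % 2 = 1 by omega,
          show (r + 1) / 2 = r / 2 by omega]
      · -- r + 1 = 2 * n, but r even and r < 2n means r+1 odd < or = 2n; r+1=2n impossible since 2n even, r+1 odd
        exfalso; omega
    rw [hg1, hg2]
    simp
  · have hL : loop = true := by
      by_contra hL
      have hP : P = 2 * n + 1 := by rw [hPdef, if_neg hL]
      rcases hcond with h | h
      · exact hL h
      · omega
    have hP : P = 2 * n + 2 := by rw [hPdef, if_pos hL]
    have hr2 : r = 2 * n := by omega
    have h1 : (r + 1) % P = 2 * n + 1 := by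
      rw [hr2]; exact Nat.mod_eq_of_lt (by omega)
    rw [hm1, h1]
    have hg1 : gW n σ τ loop r = !τ := by simp [gW, h2, hL, hr2]
    have hg2 : gW n σ τ loop (2 * n + 1) = τ := by
      simp [gW, show ¬(2 * n + 1 < 2 * n) by omega]
    rw [hg1, hg2]
    simp

theorem no4W (hn : 1 ≤ n) :
    ∀ (c : Bool) (k : ℕ),
      ¬(gW n σ τ loop (k % (2 * n + (if loop = true then 2 else 1))) = c ∧
        gW n σ τ loop ((k + 1) % (2 * n + (if loop = true then 2 else 1))) = c ∧
        gW n σ τ loop ((k + 2) % (2 * n + (if loop = true then 2 else 1))) = c ∧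
        gW n σ τ loop ((k + 3) % (2 * n + (if loop = true then 2 else 1))) = c) := by
  intro c k h
  obtain ⟨e0, e1, e2, e3⟩ := h
  have flip := flipW n σ τ loop hn
  set P := 2 * n + (if loop = true then 2 else 1) with hPdef
  have hP2n : 2 * n < P ∧ P ≤ 2 * n + 2 := by rw [hPdef]; split <;> omega
  have ha1 : k + 1 + 1 = k + 2 := by omega
  have ha2 : k + 2 + 1 = k + 3 := by omega
  by_cases hL : loop = true
  · have hdvd : 2 ∣ P := by rw [hPdef, if_pos hL]; exact ⟨n + 1, by ring⟩
    have par : ∀ m : ℕ, m % P % 2 = m % 2 := fun m => Nat.mod_mod_of_dvd m hdvd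
    by_cases hk : k % 2 = 0
    · exact flip k (by rw [par]; exact hk) (Or.inl hL) (e0.trans e1.symm)
    · refine flip (k + 1) (by rw [par]; omega) (Or.inl hL) ?_
      rw [ha1]; exact e1.trans e2.symm
  · have hP : P = 2 * n + 1 := by rw [hPdef, if_neg hL]
    have hr : k % P < P := Nat.mod_lt _ (by omega)
    by_cases c1 : k % P % 2 = 0 ∧ k % P ≠ 2 * n
    · exact flip k c1.1 (Or.inr c1.2) (e0.trans e1.symm)
    · by_cases c2 : k % P = 2 * n
      · have h1 : (k + 1) % P = 0 := by
          rw [← Nat.mod_add_mod, c2, ← hP]; simp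
        refine flip (k + 1) (by rw [h1]) (Or.inr (by rw [h1]; omega)) ?_
        rw [ha1]; exact e1.trans e2.symm
      · have hodd : k % P % 2 = 1 := by omega
        by_cases c3 : k % P + 1 = 2 * n
        · have h2' : (k + 2) % P = 0 := by
            rw [← Nat.mod_add_mod, show k % P + 2 = P by omega]; simp
          refine flip (k + 2) (by rw [h2']) (Or.inr (by rw [h2']; omega)) ?_
          rw [ha2]; exact e2.trans e3.symm
        · have h1' : (k + 1) % P = k % P + 1 := by
            rw [← Nat.mod_add_mod]; exact Nat.mod_eq_of_lt (by omega)
          refine flip (k + 1) (by rw [h1']; omega) (Or.inr (by rw [h1']; omega)) ?_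
          rw [ha1]; exact e1.trans e2.symm

theorem auxMain (hn : 1 ≤ n) (hq : ∀ i, i ≤ n → (q i).val = i)
    (hσ1 : ∀ i, i < n → δ (q i) (σ i) = some (q i))
    (hσ2 : ∀ i, i < n → δ (q i) (!σ i) = some (q (i + 1)))
    (hτ : δ (q n) τ = some (q 0))
    (hl : δ (q n) (!τ) = if loop = true then some (q n) else none) :
    (∃ w1 w2 : ℕ → Bool,
      (∃ u v : List Bool, ∃ hv : v ≠ [], w1 = upWord u v hv) ∧
      (∃ u v : List Bool, ∃ hv : v ≠ [], w2 = upWord u v hv) ∧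
      (∀ k, runP δ 0 w1 k ≠ none) ∧ (∀ k, runP δ 0 w2 k ≠ none) ∧
      infSetP δ 0 w1 = {qc | δ qc.1 qc.2 ≠ none} ∧
      infSetP δ 0 w2 = {qc | δ qc.1 qc.2 ≠ none} ∧
      w2 ∈ Lvee ∧ w1 ∉ Lvee) ∧
    ¬∃ F : Set (Set (Fin (n + 1) × Bool)),
      {w : ℕ → Bool | (∀ k, runP δ 0 w k ≠ none) ∧ infSetP δ 0 w ∈ F} =
        Lvee := by
  have hq0 : q 0 = 0 := Fin.ext (by rw [hq 0 (by omega)]; rfl)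
  set P := 2 * n + (if loop = true then 2 else 1) with hPdef
  have hP2n : 2 * n < P ∧ P ≤ 2 * n + 2 := by rw [hPdef]; split <;> omega
  have hP0 : 0 < P := by omega
  have hst0 : stW n q 0 = (0 : Fin (n + 1)) := by
    simp only [stW, if_pos (show 0 < 2 * n by omega)]
    rw [show (0 : ℕ) / 2 = 0 by omega, hq0]
  have hst20 : stW2 n q 0 = (0 : Fin (n + 1)) := by
    simp only [stW2, if_pos (show (0 : ℕ) < 3 by omega)]
    exact hq0
  have step1 := stepW n δ q σ τ loop hn hσ1 hσ2 hτ hl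
  have step2 := stepW2 n δ q σ τ loop hn hσ1 step1
  set w1 : ℕ → Bool := fun m => gW n σ τ loop (m % P) with hw1def
  set w2 : ℕ → Bool := fun m => gW2 n σ τ loop (m % (P + 3)) with hw2def
  have run1 := runP_periodic δ 0 (gW n σ τ loop) (stW n q) P hP0 hst0 step1
  have run2 := runP_periodic δ 0 (gW2 n σ τ loop) (stW2 n q) (P + 3) (by omega)
    hst20 step2
  have hI1 : infSetP δ 0 w1 = {qc | δ qc.1 qc.2 ≠ none} := by
    rw [hw1def, infSetP_periodic δ 0 (gW n σ τ loop) (stW n q) P hP0 hst0 step1]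
    apply Set.Subset.antisymm
    · rintro ⟨p, c⟩ ⟨r, hr, h1, h2⟩
      dsimp only at h1 h2
      simp only [Set.mem_setOf_eq]
      rw [← h1, ← h2, step1 r hr]
      simp
    · exact defined_sub_occ n δ q σ τ loop hn hq hσ1 hl
  have hI2 : infSetP δ 0 w2 = {qc | δ qc.1 qc.2 ≠ none} := by
    rw [hw2def, infSetP_periodic δ 0 (gW2 n σ τ loop) (stW2 n q) (P + 3)
      (by omega) hst20 step2]
    apply Set.Subset.antisymm
    · rintro ⟨p, c⟩ ⟨r, hr, h1, h2⟩
      dsimp only at h1 h2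
      simp only [Set.mem_setOf_eq]
      rw [← h1, ← h2, step2 r hr]
      simp
    · intro qc hqc
      obtain ⟨r, hr, h1, h2⟩ := defined_sub_occ n δ q σ τ loop hn hq hσ1 hl hqc
      refine ⟨r + 3, by omega, ?_, ?_⟩
      · simpa [stW2, show ¬(r + 3 < 3) by omega] using h1
      · simpa [gW2, show ¬(r + 3 < 3) by omega] using h2
  have hrun1 : ∀ k, runP δ 0 w1 k ≠ none := by
    intro k; rw [hw1def, run1 k]; simp
  have hrun2 : ∀ k, runP δ 0 w2 k ≠ none := by
    intro k; rw [hw2def, run2 k]; simp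
  have hw2L : w2 ∈ Lvee := by
    refine ⟨σ 0, ?_⟩
    apply Set.infinite_of_injective_forall_mem (f := fun m : ℕ => m * (P + 3))
    case hi =>
      intro a b hab
      simp only at hab
      exact Nat.eq_of_mul_eq_mul_right (by omega) hab
    case hf =>
      intro m
      have key : ∀ j, j < P + 3 → (m * (P + 3) + j) % (P + 3) = j := by
        intro j hj
        rw [Nat.add_comm, Nat.add_mul_mod_self_right, Nat.mod_eq_of_lt hj]
      have g0 : ∀ j, j < 3 → gW2 n σ τ loop j = σ 0 := by
        intro j hj; simp [gW2, hj]
      have g3 : gW2 n σ τ loop 3 = σ 0 := by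
        simp [gW2, gW, show 0 < 2 * n by omega]
      refine ⟨?_, ?_, ?_, ?_⟩
      · show gW2 n σ τ loop (m * (P + 3) % (P + 3)) = σ 0
        rw [Nat.mul_mod_left]
        exact g0 0 (by omega)
      · show gW2 n σ τ loop ((m * (P + 3) + 1) % (P + 3)) = σ 0
        rw [key 1 (by omega)]; exact g0 1 (by omega)
      · show gW2 n σ τ loop ((m * (P + 3) + 2) % (P + 3)) = σ 0
        rw [key 2 (by omega)]; exact g0 2 (by omega)
      · show gW2 n σ τ loop ((m * (P + 3) + 3) % (P + 3)) = σ 0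
        rw [key 3 (by omega)]; exact g3
  have hw1L : w1 ∉ Lvee := by
    rintro ⟨c, hc⟩
    obtain ⟨k, hk⟩ := hc.nonempty
    exact no4W n σ τ loop hn c k hk
  constructor
  · refine ⟨w1, w2, ?_, ?_, hrun1, hrun2, hI1, hI2, hw2L, hw1L⟩
    · refine ⟨[], List.ofFn (fun j : Fin P => gW n σ τ loop j), ?_, ?_⟩
      · intro h
        apply_fun List.length at h
        simp at h
        omega
      · rw [hw1def, upWord_nil_ofFn]
    · refine ⟨[], List.ofFn (fun j : Fin (P + 3) => gW2 n σ τ loop j), ?_, ?_⟩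
      · intro h
        apply_fun List.length at h
        simp at h
      · rw [hw2def, upWord_nil_ofFn]
  · rintro ⟨F, hF⟩
    have h2 : w2 ∈ {w : ℕ → Bool | (∀ k, runP δ 0 w k ≠ none) ∧
        infSetP δ 0 w ∈ F} := by rw [hF]; exact hw2L
    apply hw1L
    rw [← hF]
    exact ⟨hrun1, by rw [hI1, ← hI2]; exact h2.2⟩
end

/-- Let `T` be a deterministic partial transition system over
`{a, b}` (modelled by `Bool`) with states `q_0, …, q_n` (`n ≥ 1`) forming a
chain with a self-loop on every state `q_i` (`i < n`) and the other letter
leading to `q_{i+1}`, and with some letter leading from `q_n` back to `q_0`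
while on the other letter `q_n` has a self-loop or no transition.  Then there
are ultimately periodic words `w1 ∉ L_∨` and `w2 ∈ L_∨` whose runs from `q_0`
are infinite with the same infinity set, namely all defined transitions;
consequently no Muller condition on the transitions of `T` (hence no Büchi,
generalized Büchi, parity, or Rabin condition) recognizes `L_∨` on `T` with
initial state `q_0`. -/
theorem closed_chain_cannot_recognize_Lvee (n : ℕ) (hn : 1 ≤ n)
    (δ : Fin (n + 1) → Bool → Option (Fin (n + 1)))
    (hchain : ∀ i : Fin (n + 1), ∀ h : i.val < n, ∃ σ : Bool,
      δ i σ = some i ∧ δ i (!σ) = some ⟨i.val + 1, Nat.succ_lt_succ h⟩)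
    (hback : ∃ τ : Bool, δ (Fin.last n) τ = some 0 ∧
      (δ (Fin.last n) (!τ) = some (Fin.last n) ∨ δ (Fin.last n) (!τ) = none)) :
    (∃ w1 w2 : ℕ → Bool,
      (∃ u v : List Bool, ∃ hv : v ≠ [], w1 = upWord u v hv) ∧
      (∃ u v : List Bool, ∃ hv : v ≠ [], w2 = upWord u v hv) ∧
      (∀ k, runP δ 0 w1 k ≠ none) ∧ (∀ k, runP δ 0 w2 k ≠ none) ∧
      infSetP δ 0 w1 = {qc | δ qc.1 qc.2 ≠ none} ∧
      infSetP δ 0 w2 = {qc | δ qc.1 qc.2 ≠ none} ∧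
      w2 ∈ Lvee ∧ w1 ∉ Lvee) ∧
    ¬∃ F : Set (Set (Fin (n + 1) × Bool)),
      {w : ℕ → Bool | (∀ k, runP δ 0 w k ≠ none) ∧ infSetP δ 0 w ∈ F} =
        Lvee := by
  set q : ℕ → Fin (n + 1) := fun i => ⟨min i n, by omega⟩ with hqdef
  have hq : ∀ i, i ≤ n → (q i).val = i := by
    intro i hi
    simp [hqdef]
    omega
  have H : ∀ i : ℕ, ∃ c : Bool, ∀ _ : i < n,
      δ (q i) c = some (q i) ∧ δ (q i) (!c) = some (q (i + 1)) := by
    intro i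
    by_cases h : i < n
    · have hv : (q i).val < n := by rw [hq i (by omega)]; exact h
      obtain ⟨c, hc1, hc2⟩ := hchain (q i) hv
      refine ⟨c, fun _ => ⟨hc1, ?_⟩⟩
      rw [hc2]
      congr 1
      apply Fin.ext
      simp [hqdef]
      omega
    · exact ⟨true, fun h' => absurd h' h⟩
  choose σ hσ using H
  have hσ1 : ∀ i, i < n → δ (q i) (σ i) = some (q i) := fun i h => (hσ i h).1
  have hσ2 : ∀ i, i < n → δ (q i) (!σ i) = some (q (i + 1)) :=
    fun i h => (hσ i h).2
  obtain ⟨τ, hτ0, hlor⟩ := hback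
  have hqn : q n = Fin.last n := Fin.ext (by simp [hqdef])
  have hq0 : q 0 = 0 := Fin.ext (by rw [hq 0 (by omega)]; rfl)
  have hτ : δ (q n) τ = some (q 0) := by rw [hqn, hq0]; exact hτ0
  rcases hlor with h | h
  · exact auxMain n δ q σ τ true hn hq hσ1 hσ2 hτ
      (by rw [if_pos rfl, hqn]; exact h)
  · exact auxMain n δ q σ τ false hn hq hσ1 hσ2 hτ
      (by rw [if_neg (by simp), hqn]; exact h)
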